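/- Let t₀ > 0 and 0 < α < 1/4, and let G₁ : [2.5, ∞) → ℝ be a C² solution of G₁''(t) = (α/(t + t₀)²) G₁(t) with G₁(2.5) > 0 and G₁'(2.5) > 0. Then there exist constants α₁ > 0 and α₂ > 0 such that G₁(t) ≥ α₁ t^{α₂} for all t ≥ 2.5. -/

import Mathlib

open Set Real

/-- Euler-equation comparison: a solution of `G₁'' = α/(t+t₀)² G₁` with positive data
at `t = 2.5` grows at least like a positive power of `t`. -/
theorem euler_power_growth (t₀ α : ℝ) (ht₀ : 0 < t₀) (hα : 0 < α) (hα' : α < 1/4)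
    (G₁ : ℝ → ℝ) (hG : ContDiffOn ℝ 2 G₁ (Ici 2.5))
    (hode : ∀ t ≥ (2.5:ℝ), deriv (deriv G₁) t = (α / (t + t₀) ^ 2) * G₁ t)
    (hinit : 0 < G₁ 2.5) (hinit' : 0 < deriv G₁ 2.5) :
    ∃ α₁ > (0:ℝ), ∃ α₂ > (0:ℝ), ∀ t ≥ (2.5:ℝ), α₁ * t ^ α₂ ≤ G₁ t := by
  set c := deriv G₁ 2.5 with hc
  -- G₁ differentiable at 2.5 (else deriv = 0)
  have hd25 : DifferentiableAt ℝ G₁ 2.5 := by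
    by_contra h
    have h0 : deriv G₁ 2.5 = 0 := deriv_zero_of_not_differentiableAt h
    rw [h0] at hc
    linarith
  have hdiffOn : DifferentiableOn ℝ G₁ (Ici 2.5) :=
    hG.differentiableOn (by norm_num)
  have hdiff : ∀ t ∈ Ioi (2.5:ℝ), DifferentiableAt ℝ G₁ t := fun t ht =>
    (hdiffOn t (mem_Ici.mpr (le_of_lt ht))).differentiableAt (Ici_mem_nhds ht)
  -- derivWithin = deriv on Ici
  have hdw : ∀ t ∈ Ici (2.5:ℝ), derivWithin G₁ (Ici 2.5) t = deriv G₁ t := by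
    intro t ht
    rcases eq_or_lt_of_le (mem_Ici.mp ht) with h | h
    · subst h
      exact hd25.derivWithin (uniqueDiffOn_Ici _ _ self_mem_Ici)
    · exact derivWithin_of_mem_nhds (Ici_mem_nhds h)
  have hC1 : ContDiffOn ℝ 1 (derivWithin G₁ (Ici 2.5)) (Ici 2.5) :=
    hG.derivWithin (uniqueDiffOn_Ici _) (by norm_num)
  have hcont : ContinuousOn G₁ (Ici 2.5) := hG.continuousOn
  have hcont' : ContinuousOn (deriv G₁) (Ici 2.5) :=
    hC1.continuousOn.congr fun t ht => (hdw t ht).symm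
  have hdiff' : ∀ t ∈ Ioi (2.5:ℝ), DifferentiableAt ℝ (deriv G₁) t := by
    intro t ht
    have h1 : DifferentiableAt ℝ (derivWithin G₁ (Ici 2.5)) t :=
      ((hC1.differentiableOn one_ne_zero) t (mem_Ici.mpr (le_of_lt ht))).differentiableAt (Ici_mem_nhds ht)
    apply h1.congr_of_eventuallyEq
    filter_upwards [Ici_mem_nhds ht] with s hs using (hdw s hs).symm
  -- positivity of G₁ on Ici 2.5
  have hpos : ∀ t ∈ Ici (2.5:ℝ), 0 < G₁ t := by
    by_contra h
    push_neg at h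
    obtain ⟨b₀, hb₀, hb₀'⟩ := h
    set B : Set ℝ := Ici 2.5 ∩ G₁ ⁻¹' Iic 0 with hB
    have hBne : B.Nonempty := ⟨b₀, hb₀, hb₀'⟩
    have hBclosed : IsClosed B := hcont.preimage_isClosed_of_isClosed isClosed_Ici isClosed_Iic
    have hBbdd : BddBelow B := ⟨2.5, fun x hx => hx.1⟩
    set b := sInf B with hbdef
    have hbB : b ∈ B := hBclosed.csInf_mem hBne hBbdd
    have hb25 : (2.5:ℝ) ≤ b := hbB.1
    have hbG : G₁ b ≤ 0 := hbB.2
    have hbgt : (2.5:ℝ) < b := by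
      rcases eq_or_lt_of_le hb25 with h | h
      · exfalso; rw [← h] at hbG; linarith
      · exact h
    have hIcoPos : ∀ t ∈ Ico (2.5:ℝ) b, 0 < G₁ t := by
      intro t ⟨ht1, ht2⟩
      by_contra hle
      push_neg at hle
      have : t ∈ B := ⟨ht1, hle⟩
      exact absurd (csInf_le hBbdd this) (not_le.mpr ht2)
    -- deriv G₁ monotone on Icc 2.5 b
    have hmono1 : MonotoneOn (deriv G₁) (Icc 2.5 b) := by
      apply monotoneOn_of_deriv_nonneg (convex_Icc _ _)
        (hcont'.mono (Icc_subset_Ici_self))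
      · rw [interior_Icc]
        exact fun t ht => (hdiff' t ht.1).differentiableWithinAt
      · rw [interior_Icc]
        intro t ht
        rw [hode t (le_of_lt ht.1)]
        have := hIcoPos t ⟨le_of_lt ht.1, ht.2⟩
        positivity
    have hderivge : ∀ t ∈ Icc (2.5:ℝ) b, c ≤ deriv G₁ t := fun t ht =>
      hmono1 (left_mem_Icc.mpr hb25) ht ht.1
    have hmono2 : MonotoneOn G₁ (Icc 2.5 b) := by
      apply monotoneOn_of_deriv_nonneg (convex_Icc _ _)
        (hcont.mono (Icc_subset_Ici_self))
      · rw [interior_Icc]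
        exact fun t ht => (hdiff t ht.1).differentiableWithinAt
      · rw [interior_Icc]
        intro t ht
        have := hderivge t ⟨le_of_lt ht.1, le_of_lt ht.2⟩
        linarith
    have := hmono2 (left_mem_Icc.mpr hb25) (right_mem_Icc.mpr hb25) hb25
    linarith
  -- deriv G₁ ≥ c on Ici 2.5
  have hmono1 : MonotoneOn (deriv G₁) (Ici 2.5) := by
    apply monotoneOn_of_deriv_nonneg (convex_Ici _) hcont'
    · rw [interior_Ici]
      exact fun t ht => (hdiff' t ht).differentiableWithinAt
    · rw [interior_Ici]
      intro t ht
      rw [hode t (le_of_lt ht)]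
      have := hpos t (mem_Ici.mpr (le_of_lt ht))
      positivity
  have hderivge : ∀ t ∈ Ici (2.5:ℝ), c ≤ deriv G₁ t := fun t ht =>
    hmono1 self_mem_Ici ht ht
  -- linear lower bound via g t = G₁ t - c * t
  have hlin : ∀ t ∈ Ici (2.5:ℝ), G₁ 2.5 + c * (t - 2.5) ≤ G₁ t := by
    have hg : MonotoneOn (fun t => G₁ t - c * t) (Ici 2.5) := by
      apply monotoneOn_of_deriv_nonneg (convex_Ici _)
        (hcont.sub (continuousOn_const.mul continuousOn_id))
      · rw [interior_Ici]
        exact fun t ht => ((hdiff t ht).sub ((differentiableAt_const c).mul differentiableAt_id)).differentiableWithinAt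
      · rw [interior_Ici]
        intro t ht
        rw [deriv_sub (hdiff t ht) ((differentiableAt_const c).mul differentiableAt_id)]
        rw [show deriv ((fun _ => c) * id) t = c * deriv id t from deriv_const_mul _ differentiableAt_id]
        have := hderivge t (mem_Ici.mpr (le_of_lt ht))
        simp only [deriv_id, mul_one]
        linarith
    intro t ht
    have := hg self_mem_Ici ht ht
    simp only at this
    linarith
  refine ⟨min c (G₁ 2.5 / 2.5), lt_min hinit' (by positivity), 1, one_pos, ?_⟩
  intro t ht
  rw [Real.rpow_one]
  have h1 : min c (G₁ 2.5 / 2.5) ≤ c := min_le_left _ _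
  have h2 : min c (G₁ 2.5 / 2.5) ≤ G₁ 2.5 / 2.5 := min_le_right _ _
  have h3 := hlin t ht
  have h4 : min c (G₁ 2.5 / 2.5) * (t - 2.5) ≤ c * (t - 2.5) :=
    mul_le_mul_of_nonneg_right h1 (by linarith)
  have h5 : min c (G₁ 2.5 / 2.5) * 2.5 ≤ G₁ 2.5 := by
    have := mul_le_mul_of_nonneg_right h2 (by norm_num : (0:ℝ) ≤ 2.5)
    calc min c (G₁ 2.5 / 2.5) * 2.5 ≤ G₁ 2.5 / 2.5 * 2.5 := this
      _ = G₁ 2.5 := by ring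
  nlinarith [h3, h4, h5]
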